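/- Suppose there exists a perfect (b,c)-coloring of the Doob graph D(m,n) (with b,c ≥ 1 and 2m+n ≥ 1). Then: (1) (b+c)/gcd(b,c) = 2^k for some positive integer k; (2) b+c = 4i for some i in {1,...,2m+n}; (3) if c = 1 then b = 4^l − 1 for some positive integer l and n ≠ 0, and symmetrically if b = 1 then c = 4^l − 1 for some positive integer l and n ≠ 0. -/

import Mathlib

open SimpleGraph

/-- The Shrikhande graph: Cayley graph on `ZMod 4 × ZMod 4` with connection set
`{(0,1),(0,3),(1,0),(3,0),(1,1),(3,3)}`. -/
def shrikhande : SimpleGraph (ZMod 4 × ZMod 4) :=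
  SimpleGraph.fromRel (fun x y =>
    x - y ∈ ({(0, 1), (0, 3), (1, 0), (3, 0), (1, 1), (3, 3)} : Set (ZMod 4 × ZMod 4)))

/-- Vertices of the Doob graph `D(m,n)`. -/
abbrev DoobVertex (m n : ℕ) := (Fin m → ZMod 4 × ZMod 4) × (Fin n → ZMod 4)

/-- The Doob graph `D(m,n)`: the Cartesian (box) product of `m` copies of the
Shrikhande graph and `n` copies of the complete graph `K₄`. Two vertices are
adjacent iff they differ in exactly one coordinate and are adjacent in the
corresponding factor. -/
def doobGraph (m n : ℕ) : SimpleGraph (DoobVertex m n) :=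
  SimpleGraph.fromRel (fun x y =>
    (∃ i, shrikhande.Adj (x.1 i) (y.1 i) ∧ (∀ j, j ≠ i → x.1 j = y.1 j) ∧ x.2 = y.2) ∨
    (∃ i, x.2 i ≠ y.2 i ∧ (∀ j, j ≠ i → x.2 j = y.2 j) ∧ x.1 = y.1))

/-- `f` is a perfect coloring of `G` with quotient matrix `S`: `f` is surjective and
every vertex of color `i` has exactly `S i j` neighbors of color `j`. -/
def IsPerfectColoring {V C : Type*} (G : SimpleGraph V) (f : V → C)
    (S : Matrix C C ℕ) : Prop :=
  Function.Surjective f ∧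
    ∀ x c, {y | G.Adj x y ∧ f y = c}.ncard = S (f x) c

/-- A perfect `(b,c)`-coloring: a perfect 2-coloring in which every vertex of
color `0` has exactly `b` neighbors of color `1`, every vertex of color `1` has
exactly `c` neighbors of color `0` (and the numbers of same-color neighbors are
also constant on each color class). -/
def IsPerfectBCColoring {V : Type*} (G : SimpleGraph V) (f : V → Fin 2)
    (b c : ℕ) : Prop :=
  ∃ a d : ℕ,
    IsPerfectColoring G f (Matrix.of ![![a, b], ![c, d]])

namespace S2
open Finset
abbrev Z4 := ZMod 4
abbrev SV := Z4 × Z4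

def shSF : Finset SV := {(0,1),(0,3),(1,0),(3,0),(1,1),(3,3)}
def K3 : Finset Z4 := {1,2,3}

lemma shSF_card : shSF.card = 6 := by decide
lemma K3_card : K3.card = 3 := by decide
lemma mem_K3 {t : Z4} : t ∈ K3 ↔ t ≠ 0 := by revert t; decide
lemma shSF_ne_zero {s : SV} (h : s ∈ shSF) : s ≠ 0 := by revert h; revert s; decide

lemma shrik_adj_iff (a b : SV) : shrikhande.Adj a b ↔ b - a ∈ shSF := by
  rw [shrikhande, fromRel_adj]
  simp only [Set.mem_insert_iff, Set.mem_singleton_iff]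
  revert a b; decide

variable {m n : ℕ}

lemma doob_adj_iff (x y : DoobVertex m n) :
    (doobGraph m n).Adj x y ↔
    ((∃ i, shrikhande.Adj (x.1 i) (y.1 i) ∧ (∀ j, j ≠ i → x.1 j = y.1 j) ∧ x.2 = y.2) ∨
    (∃ i, x.2 i ≠ y.2 i ∧ (∀ j, j ≠ i → x.2 j = y.2 j) ∧ x.1 = y.1)) := by
  rw [doobGraph, fromRel_adj]
  constructor
  · rintro ⟨hne, h | h⟩
    · exact h
    · rcases h with ⟨i, ha, hb, hc⟩ | ⟨i, ha, hb, hc⟩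
      · exact Or.inl ⟨i, ha.symm, fun j hj => (hb j hj).symm, hc.symm⟩
      · exact Or.inr ⟨i, ha.symm, fun j hj => (hb j hj).symm, hc.symm⟩
  · intro h
    refine ⟨?_, Or.inl h⟩
    rcases h with ⟨i, ha, _, _⟩ | ⟨i, ha, _, _⟩
    · intro hxy; exact ha.ne (by rw [hxy])
    · intro hxy; exact ha (by rw [hxy])

def updSh (v : DoobVertex m n) (i : Fin m) (s : SV) : DoobVertex m n :=
  (Function.update v.1 i (v.1 i + s), v.2)

def updK (v : DoobVertex m n) (j : Fin n) (t : Z4) : DoobVertex m n :=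
  (v.1, Function.update v.2 j (v.2 j + t))

open scoped Classical in
noncomputable def nbrF (v : DoobVertex m n) : Finset (DoobVertex m n) :=
  Finset.univ.filter ((doobGraph m n).Adj v)

lemma mem_nbrF {v u : DoobVertex m n} : u ∈ nbrF v ↔ (doobGraph m n).Adj v u := by
  classical simp [nbrF]

lemma adj_updSh (v : DoobVertex m n) {i : Fin m} {s : SV} (hs : s ∈ shSF) :
    (doobGraph m n).Adj v (updSh v i s) := by
  rw [doob_adj_iff]
  refine Or.inl ⟨i, ?_, fun j hj => ?_, rfl⟩
  · rw [shrik_adj_iff, updSh]; simpa using hs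
  · simp [updSh, Function.update_of_ne hj]

lemma adj_updK (v : DoobVertex m n) {j : Fin n} {t : Z4} (ht : t ∈ K3) :
    (doobGraph m n).Adj v (updK v j t) := by
  rw [doob_adj_iff]
  refine Or.inr ⟨j, ?_, fun j' hj' => ?_, rfl⟩
  · simp [updK]; exact mem_K3.mp ht
  · simp [updK, Function.update_of_ne hj']

lemma nbr_eq (v : DoobVertex m n) :
    nbrF v = ((univ ×ˢ shSF).image fun p : Fin m × SV => updSh v p.1 p.2) ∪
      ((univ ×ˢ K3).image fun p : Fin n × Z4 => updK v p.1 p.2) := by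
  ext u
  simp only [mem_union, mem_image, mem_product, mem_univ, true_and, mem_nbrF]
  constructor
  · rw [doob_adj_iff]
    rintro (⟨i, ha, hb, hc⟩ | ⟨i, ha, hb, hc⟩)
    · refine Or.inl ⟨(i, u.1 i - v.1 i), (shrik_adj_iff _ _).mp ha, ?_⟩
      refine Prod.ext ?_ hc
      show Function.update v.1 i (v.1 i + (u.1 i - v.1 i)) = u.1
      funext j
      by_cases hj : j = i
      · subst hj; simp
      · rw [Function.update_of_ne hj, hb j hj]
    · refine Or.inr ⟨(i, u.2 i - v.2 i),
        mem_K3.mpr (by simpa [sub_eq_zero] using fun h => ha h.symm), ?_⟩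
      refine Prod.ext hc ?_
      show Function.update v.2 i (v.2 i + (u.2 i - v.2 i)) = u.2
      funext j
      by_cases hj : j = i
      · subst hj; simp
      · rw [Function.update_of_ne hj, hb j hj]
  · rintro (⟨p, hp, rfl⟩ | ⟨p, hp, rfl⟩)
    · exact adj_updSh v hp
    · exact adj_updK v hp

lemma updSh_fst_ne (v : DoobVertex m n) {i : Fin m} {s : SV} (hs : s ∈ shSF) :
    (updSh v i s).1 ≠ v.1 := by
  intro h
  have := congrFun h i
  simp [updSh] at this
  exact shSF_ne_zero hs this

lemma disj_nbr (v : DoobVertex m n) :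
    Disjoint ((univ ×ˢ shSF).image fun p : Fin m × SV => updSh v p.1 p.2)
      ((univ ×ˢ K3).image fun p : Fin n × Z4 => updK v p.1 p.2) := by
  rw [Finset.disjoint_left]
  rintro u hu hu'
  simp only [mem_image, mem_product, mem_univ, true_and] at hu hu'
  obtain ⟨p, hp, rfl⟩ := hu
  obtain ⟨q, hq, h⟩ := hu'
  exact updSh_fst_ne v hp (by rw [← h]; rfl)

lemma injOn_updSh (v : DoobVertex m n) :
    Set.InjOn (fun p : Fin m × SV => updSh v p.1 p.2) (univ ×ˢ shSF) := by
  rintro ⟨i, s⟩ hp ⟨i', s'⟩ hp' h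
  simp only [coe_product, Set.mem_prod, mem_coe, mem_univ, true_and] at hp hp'
  have h1 := congrArg Prod.fst h
  simp only [updSh] at h1
  by_cases hii : i = i'
  · subst hii
    have := congrFun h1 i
    simp at this
    simp [this]
  · exfalso
    have := congrFun h1 i'
    rw [Function.update_of_ne (Ne.symm hii), Function.update_self] at this
    exact shSF_ne_zero hp' (by rwa [left_eq_add] at this)

lemma injOn_updK (v : DoobVertex m n) :
    Set.InjOn (fun p : Fin n × Z4 => updK v p.1 p.2) (univ ×ˢ K3) := by
  rintro ⟨i, s⟩ hp ⟨i', s'⟩ hp' h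
  simp only [coe_product, Set.mem_prod, mem_coe, mem_univ, true_and] at hp hp'
  have h1 := congrArg Prod.snd h
  simp only [updK] at h1
  by_cases hii : i = i'
  · subst hii
    have := congrFun h1 i
    simp at this
    simp [this]
  · exfalso
    have := congrFun h1 i'
    rw [Function.update_of_ne (Ne.symm hii), Function.update_self] at this
    exact mem_K3.mp hp' (by rwa [left_eq_add] at this)

lemma sum_nbr {M : Type*} [AddCommMonoid M] (v : DoobVertex m n) (g : DoobVertex m n → M) :
    ∑ u ∈ nbrF v, g u =
      (∑ i : Fin m, ∑ s ∈ shSF, g (updSh v i s)) + ∑ j : Fin n, ∑ t ∈ K3, g (updK v j t) := by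
  rw [nbr_eq, Finset.sum_union (disj_nbr v),
    Finset.sum_image (fun p hp q hq h => injOn_updSh v (by simpa using hp) (by simpa using hq) h),
    Finset.sum_image (fun p hp q hq h => injOn_updK v (by simpa using hp) (by simpa using hq) h),
    Finset.sum_product, Finset.sum_product]

lemma card_nbr (v : DoobVertex m n) : (nbrF v).card = 6 * m + 3 * n := by
  have := sum_nbr v (fun _ => (1 : ℕ))
  simp only [Finset.sum_const, smul_eq_mul, mul_one, Finset.card_univ, Fintype.card_fin,
    shSF_card, K3_card] at this
  omega


/-! ### Characters with values in the Gaussian integers -/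

noncomputable def e (t : Z4) : GaussianInt := Zsqrtd.sqrtd ^ t.val

lemma e_zero : e 0 = 1 := by decide
lemma e_add : ∀ a b : Z4, e (a + b) = e a * e b := by decide

lemma e_sum {ι : Type*} (s : Finset ι) (g : ι → Z4) :
    e (∑ i ∈ s, g i) = ∏ i ∈ s, e (g i) := by
  induction s using Finset.cons_induction with
  | empty => simpa using e_zero
  | cons a s ha ih => rw [Finset.sum_cons, Finset.prod_cons, e_add, ih]

def pairSV (a b : SV) : Z4 := a.1 * b.1 + a.2 * b.2

lemma pairSV_zero (a : SV) : pairSV a 0 = 0 := by simp [pairSV]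
lemma pairSV_add (a b c : SV) : pairSV a (b + c) = pairSV a b + pairSV a c := by
  simp [pairSV]; ring
lemma pairSV_neg (a b : SV) : pairSV a (-b) = -pairSV a b := by
  simp [pairSV]; ring

def Pr (w x : DoobVertex m n) : Z4 :=
  (∑ i, pairSV (w.1 i) (x.1 i)) + ∑ j, w.2 j * x.2 j

lemma Pr_zero (w : DoobVertex m n) : Pr w 0 = 0 := by
  simp [Pr, pairSV_zero]

lemma Pr_add (w x y : DoobVertex m n) : Pr w (x + y) = Pr w x + Pr w y := by
  simp only [Pr, Prod.fst_add, Prod.snd_add, Pi.add_apply, pairSV_add, mul_add,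
    Finset.sum_add_distrib]
  ring

lemma Pr_neg (w x : DoobVertex m n) : Pr w (-x) = -Pr w x := by
  simp only [Pr, Prod.fst_neg, Prod.snd_neg, Pi.neg_apply, pairSV_neg, mul_neg,
    Finset.sum_neg_distrib]
  ring

lemma e_Pr (w x : DoobVertex m n) :
    e (Pr w x) = (∏ i, e (pairSV (w.1 i) (x.1 i))) * ∏ j, e (w.2 j * x.2 j) := by
  rw [Pr, e_add, e_sum, e_sum]

lemma orthSV {b : SV} (hb : b ≠ 0) : ∑ a : SV, e (pairSV a b) = 0 := by
  revert b; decide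

lemma orthZ4 {u : Z4} (hu : u ≠ 0) : ∑ t : Z4, e (t * u) = 0 := by
  revert u; decide

lemma sum_char {z : DoobVertex m n} (hz : z ≠ 0) :
    ∑ w : DoobVertex m n, e (Pr w z) = 0 := by
  classical
  have hfac : ∑ w : DoobVertex m n, e (Pr w z) =
      (∑ w1 : Fin m → SV, ∏ i, e (pairSV (w1 i) (z.1 i))) *
        ∑ w2 : Fin n → Z4, ∏ j, e (w2 j * z.2 j) := by
    rw [Fintype.sum_prod_type, Finset.sum_mul_sum]
    simp only [e_Pr]
  rw [hfac]
  have h1 : (∑ w1 : Fin m → SV, ∏ i, e (pairSV (w1 i) (z.1 i))) =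
      ∏ i, ∑ a : SV, e (pairSV a (z.1 i)) := by
    have := Finset.prod_univ_sum (fun _ : Fin m => (univ : Finset SV))
      (fun i a => e (pairSV a (z.1 i)))
    rw [Fintype.piFinset_univ] at this
    exact this.symm
  have h2 : (∑ w2 : Fin n → Z4, ∏ j, e (w2 j * z.2 j)) =
      ∏ j, ∑ t : Z4, e (t * z.2 j) := by
    have := Finset.prod_univ_sum (fun _ : Fin n => (univ : Finset Z4))
      (fun j t => e (t * z.2 j))
    rw [Fintype.piFinset_univ] at this
    exact this.symm
  rw [h1, h2]
  have hz' : z.1 ≠ 0 ∨ z.2 ≠ 0 := by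
    by_contra h
    push_neg at h
    exact hz (Prod.ext h.1 h.2)
  rcases hz' with h | h
  · rw [Finset.prod_eq_zero (Finset.mem_univ (Function.ne_iff.mp h).choose)
      (orthSV (Function.ne_iff.mp h).choose_spec), zero_mul]
  · rw [Finset.prod_eq_zero (Finset.mem_univ (Function.ne_iff.mp h).choose)
      (orthZ4 (Function.ne_iff.mp h).choose_spec), mul_zero]


lemma card_V : Fintype.card (DoobVertex m n) = 4 ^ (2 * m + n) := by
  have : Fintype.card (DoobVertex m n) = 16 ^ m * 4 ^ n := by
    simp [DoobVertex, ZMod.card]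
  rw [this, pow_add, show (16:ℕ) = 4 ^ 2 from rfl, ← pow_mul]

lemma exists_freq (y : DoobVertex m n → GaussianInt) (v0 : DoobVertex m n) (hy : y v0 ≠ 0) :
    ∃ w, ∑ v, y v * e (Pr w v) ≠ 0 := by
  classical
  by_contra hcon
  push_neg at hcon
  apply hy
  have T : ∑ w : DoobVertex m n, (∑ v, y v * e (Pr w v)) * e (Pr w (-v0)) = 0 := by
    simp only [hcon, zero_mul, Finset.sum_const_zero]
  have T2 : ∑ w : DoobVertex m n, (∑ v, y v * e (Pr w v)) * e (Pr w (-v0)) =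
      ∑ v, y v * ∑ w : DoobVertex m n, e (Pr w (v + -v0)) := by
    simp only [Finset.sum_mul]
    rw [Finset.sum_comm]
    refine Finset.sum_congr rfl fun v _ => ?_
    rw [Finset.mul_sum]
    refine Finset.sum_congr rfl fun w _ => ?_
    rw [mul_assoc, ← e_add, ← Pr_add]
  have T3 : ∑ v, y v * ∑ w : DoobVertex m n, e (Pr w (v + -v0)) =
      y v0 * (Fintype.card (DoobVertex m n) : GaussianInt) := by
    rw [Finset.sum_eq_single v0]
    · rw [add_neg_cancel]
      simp [Pr_zero, e_zero, Finset.card_univ]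
    · intro v _ hv
      rw [sum_char (by
        intro h
        apply hv
        have := congrArg (· + v0) h
        simpa using this), mul_zero]
    · intro h
      exact absurd (Finset.mem_univ v0) h
  have := T2.symm.trans T
  rw [T3] at this
  rcases mul_eq_zero.mp this with h | h
  · exact h
  · exact absurd h (by
      simp only [Nat.cast_eq_zero]
      exact Fintype.card_ne_zero)

/-! ### Eigenvalue argument -/

def deltaSh (i : Fin m) (s : SV) : DoobVertex m n := (Function.update 0 i s, 0)
def deltaK (j : Fin n) (t : Z4) : DoobVertex m n := (0, Function.update 0 j t)

lemma updSh_eq_add (v : DoobVertex m n) (i : Fin m) (s : SV) :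
    updSh v i s = v + deltaSh i s := by
  refine Prod.ext ?_ ?_
  · show Function.update v.1 i (v.1 i + s) = v.1 + Function.update (0 : Fin m → SV) i s
    funext j
    by_cases hj : j = i
    · subst hj; simp
    · simp [Function.update_of_ne hj]
  · show v.2 = v.2 + 0
    simp

lemma updK_eq_add (v : DoobVertex m n) (j : Fin n) (t : Z4) :
    updK v j t = v + deltaK j t := by
  refine Prod.ext ?_ ?_
  · show v.1 = v.1 + 0
    simp
  · show Function.update v.2 j (v.2 j + t) = v.2 + Function.update (0 : Fin n → Z4) j t
    funext j'
    by_cases hj : j' = j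
    · subst hj; simp
    · simp [Function.update_of_ne hj]

lemma Pr_deltaSh (w : DoobVertex m n) (i : Fin m) (s : SV) :
    Pr w (deltaSh i s) = pairSV (w.1 i) s := by
  unfold Pr deltaSh
  dsimp only
  rw [show (∑ j, w.2 j * ((0 : Fin n → Z4) j)) = 0 by simp, add_zero]
  rw [Finset.sum_eq_single i]
  · simp
  · intro i' _ hi'
    rw [show (Function.update (0 : Fin m → SV) i s) i' = 0 from Function.update_of_ne hi' _ _,
      pairSV_zero]
  · intro h; exact absurd (Finset.mem_univ i) h

lemma Pr_deltaK (w : DoobVertex m n) (j : Fin n) (t : Z4) :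
    Pr w (deltaK j t) = w.2 j * t := by
  unfold Pr deltaK
  dsimp only
  rw [show (∑ i, pairSV (w.1 i) ((0 : Fin m → SV) i)) = 0 by simp [pairSV_zero], zero_add]
  rw [Finset.sum_eq_single j]
  · simp
  · intro j' _ hj'
    rw [show (Function.update (0 : Fin n → Z4) j t) j' = 0 from Function.update_of_ne hj' _ _,
      mul_zero]
  · intro h; exact absurd (Finset.mem_univ j) h

lemma shift_sum (y : DoobVertex m n → GaussianInt) (w δ : DoobVertex m n) :
    ∑ v, y (v + δ) * e (Pr w v) = e (-Pr w δ) * ∑ v, y v * e (Pr w v) := by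
  have hb : Function.Bijective (fun v : DoobVertex m n => v + δ) :=
    (Equiv.addRight δ).bijective
  rw [Fintype.sum_bijective _ hb _ (fun u => y u * (e (-Pr w δ) * e (Pr w u)))
    (fun v => ?_)]
  · rw [Finset.mul_sum]
    refine Finset.sum_congr rfl fun u _ => by ring
  · show y (v + δ) * e (Pr w v) = y (v + δ) * (e (-Pr w δ) * e (Pr w (v + δ)))
    have h1 : e (-Pr w δ) * e (Pr w δ) = 1 := by
      rw [← e_add, neg_add_cancel, e_zero]
    calc y (v + δ) * e (Pr w v)
        = y (v + δ) * e (Pr w v) * (e (-Pr w δ) * e (Pr w δ)) := by rw [h1, mul_one]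
      _ = y (v + δ) * (e (-Pr w δ) * (e (Pr w v) * e (Pr w δ))) := by ring
      _ = y (v + δ) * (e (-Pr w δ) * e (Pr w (v + δ))) := by rw [Pr_add, e_add]

lemma Bsh_mem : ∀ ω : SV, ∑ s ∈ shSF, e (-(pairSV ω s)) ∈ ({6, 2, -2} : Finset GaussianInt) := by
  decide

lemma Bk_mem : ∀ α : Z4, ∑ t ∈ K3, e (-(α * t)) ∈ ({3, -1} : Finset GaussianInt) := by
  decide

lemma agg {ι : Type*} (s : Finset ι) (g : ι → GaussianInt) (p r : ℕ)
    (h : ∀ i ∈ s, ∃ j : ℕ, j ≤ r ∧ g i = (p : GaussianInt) - 4 * j) :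
    ∃ J : ℕ, J ≤ r * s.card ∧ ∑ i ∈ s, g i = (p * s.card : ℕ) - 4 * (J : GaussianInt) := by
  classical
  induction s using Finset.cons_induction with
  | empty => exact ⟨0, by simp⟩
  | cons a s ha ih =>
    obtain ⟨J, hJ, hsum⟩ := ih (fun i hi => h i (Finset.mem_cons_of_mem hi))
    obtain ⟨j, hj, hval⟩ := h a (Finset.mem_cons_self a s)
    refine ⟨j + J, ?_, ?_⟩
    · rw [Finset.card_cons]; nlinarith
    · rw [Finset.sum_cons, hval, hsum, Finset.card_cons]
      push_cast
      ring


/-! ### Perfect coloring counting -/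

def Smat (a b c d : ℕ) : Matrix (Fin 2) (Fin 2) ℕ := Matrix.of ![![a, b], ![c, d]]

lemma Smat00 {a b c d : ℕ} : Smat a b c d 0 0 = a := rfl
lemma Smat01 {a b c d : ℕ} : Smat a b c d 0 1 = b := rfl
lemma Smat10 {a b c d : ℕ} : Smat a b c d 1 0 = c := rfl
lemma Smat11 {a b c d : ℕ} : Smat a b c d 1 1 = d := rfl

lemma fin2_cases (x : Fin 2) : x = 0 ∨ x = 1 := by omega
lemma fin2_ne (x : Fin 2) : ¬x = 0 ↔ x = 1 := by omega

variable {a b c d : ℕ} {f : DoobVertex m n → Fin 2}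

open scoped Classical in
lemma count_eq (hf : IsPerfectColoring (doobGraph m n) f (Smat a b c d))
    (x : DoobVertex m n) (c' : Fin 2) :
    ((nbrF x).filter (fun u => f u = c')).card = Smat a b c d (f x) c' := by
  rw [← hf.2 x c', ← Set.ncard_coe_finset]
  congr 1
  ext u
  simp only [Finset.coe_filter, Set.mem_setOf_eq, mem_nbrF]

open scoped Classical in
lemma deg_eq (hf : IsPerfectColoring (doobGraph m n) f (Smat a b c d))
    (v : DoobVertex m n) :
    Smat a b c d (f v) 0 + Smat a b c d (f v) 1 = 6 * m + 3 * n := by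
  rw [← count_eq hf v 0, ← count_eq hf v 1, ← card_nbr v,
    ← Finset.card_filter_add_card_filter_not (s := nbrF v) (p := fun u => f u = 0)]
  congr 2
  apply Finset.filter_congr
  intro u _
  simp [fin2_ne]

lemma hab_deg (hf : IsPerfectColoring (doobGraph m n) f (Smat a b c d)) :
    a + b = 6 * m + 3 * n := by
  obtain ⟨v, hv⟩ := hf.1 0
  have := deg_eq hf v
  rwa [hv, Smat00, Smat01] at this

lemma hcd_deg (hf : IsPerfectColoring (doobGraph m n) f (Smat a b c d)) :
    c + d = 6 * m + 3 * n := by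
  obtain ⟨v, hv⟩ := hf.1 1
  have := deg_eq hf v
  rwa [hv, Smat10, Smat11] at this

lemma of626 {x : GaussianInt} (hx : x ∈ ({6, 2, -2} : Finset GaussianInt)) :
    ∃ j : ℕ, j ≤ 2 ∧ x = ((6 : ℕ) : GaussianInt) - 4 * (j : ℕ) := by
  simp only [Finset.mem_insert, Finset.mem_singleton] at hx
  rcases hx with rfl | rfl | rfl
  · exact ⟨0, by norm_num, by norm_num⟩
  · exact ⟨1, by norm_num, by norm_num⟩
  · exact ⟨2, by norm_num, by norm_num⟩

lemma of31 {x : GaussianInt} (hx : x ∈ ({3, -1} : Finset GaussianInt)) :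
    ∃ j : ℕ, j ≤ 1 ∧ x = ((3 : ℕ) : GaussianInt) - 4 * (j : ℕ) := by
  simp only [Finset.mem_insert, Finset.mem_singleton] at hx
  rcases hx with rfl | rfl
  · exact ⟨0, by norm_num, by norm_num⟩
  · exact ⟨1, by norm_num, by norm_num⟩

open scoped Classical in
lemma bc_four (hf : IsPerfectColoring (doobGraph m n) f (Smat a b c d))
    (hb : 1 ≤ b) (hc : 1 ≤ c) :
    ∃ J : ℕ, 1 ≤ J ∧ J ≤ 2 * m + n ∧ b + c = 4 * J := by
  set y : DoobVertex m n → GaussianInt :=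
    fun v => if f v = 0 then ((b : ℕ) : GaussianInt) else -((c : ℕ) : GaussianInt) with hy
  -- local eigenvector relation
  have hloc : ∀ v, ∑ u ∈ nbrF v, y u = ((a : GaussianInt) - (c : GaussianInt)) * y v := by
    intro v
    have h2 : (nbrF v).filter (fun u => ¬f u = 0) = (nbrF v).filter (fun u => f u = 1) := by
      apply Finset.filter_congr
      intro u _
      simp [fin2_ne]
    have hsplit : ∑ u ∈ nbrF v, y u =
        ((((nbrF v).filter (fun u => f u = 0)).card : GaussianInt)) * (b : ℕ) -
        ((((nbrF v).filter (fun u => f u = 1)).card : GaussianInt)) * (c : ℕ) := by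
      rw [← Finset.sum_filter_add_sum_filter_not (nbrF v) (fun u => f u = 0) y]
      have e1 : ∑ u ∈ (nbrF v).filter (fun u => f u = 0), y u
          = (((nbrF v).filter (fun u => f u = 0)).card : GaussianInt) * (b : ℕ) := by
        rw [Finset.sum_congr rfl (fun u hu => show y u = ((b : ℕ) : GaussianInt) by
          simp [hy, (Finset.mem_filter.mp hu).2]), Finset.sum_const, nsmul_eq_mul]
      have e2 : ∑ u ∈ (nbrF v).filter (fun u => ¬f u = 0), y u
          = (((nbrF v).filter (fun u => f u = 1)).card : GaussianInt) * (-((c : ℕ) : GaussianInt)) := by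
        rw [h2, Finset.sum_congr rfl (fun u hu => show y u = -((c : ℕ) : GaussianInt) by
          have h3 := (Finset.mem_filter.mp hu).2
          simp [hy, show ¬f u = 0 from (fin2_ne (f u)).mpr h3]), Finset.sum_const, nsmul_eq_mul]
      rw [e1, e2]
      ring
    rw [hsplit, count_eq hf v 0, count_eq hf v 1]
    rcases fin2_cases (f v) with h | h
    · rw [h, Smat00, Smat01]
      simp only [hy, h, if_pos]
      push_cast
      ring
    · rw [h, Smat10, Smat11]
      have hne : ¬f v = 0 := (fin2_ne (f v)).mpr h
      simp only [hy, if_neg hne]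
      have habc : ((a : GaussianInt)) + (b : ℕ) = ((c : ℕ) : GaussianInt) + (d : ℕ) := by
        have h4 : a + b = c + d := (hab_deg hf).trans (hcd_deg hf).symm
        exact_mod_cast congrArg (fun t : ℕ => (t : GaussianInt)) h4
      linear_combination ((c : ℕ) : GaussianInt) * habc
  -- pick a nonvanishing frequency
  obtain ⟨v0, hv0⟩ := hf.1 0
  have hy0 : y v0 ≠ 0 := by
    simp only [hy, hv0, if_pos]
    exact Nat.cast_ne_zero.mpr (by omega)
  obtain ⟨w, hw⟩ := exists_freq y v0 hy0
  set F : GaussianInt := ∑ v, y v * e (Pr w v) with hF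
  have key : ((a : GaussianInt) - (c : ℕ)) * F =
      ((∑ i, ∑ s ∈ shSF, e (-pairSV (w.1 i) s)) + ∑ j, ∑ t ∈ K3, e (-(w.2 j * t))) * F := by
    have lhs : ((a : GaussianInt) - (c : ℕ)) * F = ∑ v, (∑ u ∈ nbrF v, y u) * e (Pr w v) := by
      rw [hF, Finset.mul_sum]
      refine Finset.sum_congr rfl fun v _ => ?_
      rw [hloc v]
      ring
    rw [lhs]
    have expand : ∀ v : DoobVertex m n, (∑ u ∈ nbrF v, y u) * e (Pr w v)
        = (∑ i, ∑ s ∈ shSF, y (updSh v i s) * e (Pr w v)) +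
          ∑ j, ∑ t ∈ K3, y (updK v j t) * e (Pr w v) := by
      intro v
      rw [sum_nbr v y, add_mul, Finset.sum_mul, Finset.sum_mul]
      congr 1
      · exact Finset.sum_congr rfl fun i _ => Finset.sum_mul ..
      · exact Finset.sum_congr rfl fun j _ => Finset.sum_mul ..
    rw [Finset.sum_congr rfl fun v _ => expand v, Finset.sum_add_distrib]
    have part1 : ∑ v, ∑ i : Fin m, ∑ s ∈ shSF, y (updSh v i s) * e (Pr w v)
        = (∑ i, ∑ s ∈ shSF, e (-pairSV (w.1 i) s)) * F := by
      rw [Finset.sum_comm, Finset.sum_mul]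
      refine Finset.sum_congr rfl fun i _ => ?_
      rw [Finset.sum_comm, Finset.sum_mul]
      refine Finset.sum_congr rfl fun s _ => ?_
      calc ∑ v, y (updSh v i s) * e (Pr w v)
          = ∑ v, y (v + deltaSh i s) * e (Pr w v) :=
            Finset.sum_congr rfl fun v _ => by rw [updSh_eq_add]
        _ = e (-Pr w (deltaSh i s)) * F := shift_sum y w (deltaSh i s)
        _ = e (-pairSV (w.1 i) s) * F := by rw [Pr_deltaSh]
    have part2 : ∑ v, ∑ j : Fin n, ∑ t ∈ K3, y (updK v j t) * e (Pr w v)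
        = (∑ j, ∑ t ∈ K3, e (-(w.2 j * t))) * F := by
      rw [Finset.sum_comm, Finset.sum_mul]
      refine Finset.sum_congr rfl fun j _ => ?_
      rw [Finset.sum_comm, Finset.sum_mul]
      refine Finset.sum_congr rfl fun t _ => ?_
      calc ∑ v, y (updK v j t) * e (Pr w v)
          = ∑ v, y (v + deltaK j t) * e (Pr w v) :=
            Finset.sum_congr rfl fun v _ => by rw [updK_eq_add]
        _ = e (-Pr w (deltaK j t)) * F := shift_sum y w (deltaK j t)
        _ = e (-(w.2 j * t)) * F := by rw [Pr_deltaK]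
    rw [part1, part2, add_mul]
  have theta_eq := mul_right_cancel₀ hw key
  obtain ⟨J1, hJ1, hsum1⟩ := agg univ (fun i : Fin m => ∑ s ∈ shSF, e (-pairSV (w.1 i) s))
    6 2 (fun i _ => of626 (Bsh_mem (w.1 i)))
  obtain ⟨J2, hJ2, hsum2⟩ := agg univ (fun j : Fin n => ∑ t ∈ K3, e (-(w.2 j * t)))
    3 1 (fun j _ => of31 (Bk_mem (w.2 j)))
  rw [hsum1, hsum2] at theta_eq
  simp only [Finset.card_univ, Fintype.card_fin] at theta_eq hJ1 hJ2
  have habc : ((a : GaussianInt)) + (b : ℕ) = ((6 * m + 3 * n : ℕ) : GaussianInt) := by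
    exact_mod_cast congrArg (fun t : ℕ => (t : GaussianInt)) (hab_deg hf)
  have hcast : ((b + c : ℕ) : GaussianInt) = ((4 * (J1 + J2) : ℕ) : GaussianInt) := by
    push_cast at habc theta_eq ⊢
    linear_combination habc - theta_eq
  have hbc : b + c = 4 * (J1 + J2) := Nat.cast_injective hcast
  exact ⟨J1 + J2, by omega, by omega, hbc⟩


/-! ### Global counting -/

open scoped Classical in
lemma count_classes (hf : IsPerfectColoring (doobGraph m n) f (Smat a b c d)) :
    ∃ N0 N1 : ℕ, 1 ≤ N0 ∧ 1 ≤ N1 ∧ N0 + N1 = 4 ^ (2 * m + n) ∧ N0 * b = N1 * c := by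
  set C0 := univ.filter (fun v : DoobVertex m n => f v = 0) with hC0
  set C1 := univ.filter (fun v : DoobVertex m n => f v = 1) with hC1
  set E := univ.filter (fun p : DoobVertex m n × DoobVertex m n =>
    (doobGraph m n).Adj p.1 p.2 ∧ f p.1 = 0 ∧ f p.2 = 1) with hE
  have h1 : E.card = C0.card * b := by
    rw [Finset.card_eq_sum_card_fiberwise (f := Prod.fst) (t := C0)
      (fun p hp => by
        simp only [hE, Finset.coe_filter, Set.mem_setOf_eq, Finset.mem_filter, Finset.mem_univ, true_and] at hp
        simp [hC0, hp.2.1])]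
    rw [Finset.sum_congr rfl (fun v hv => ?_), Finset.sum_const, smul_eq_mul]
    have hv0 : f v = 0 := (Finset.mem_filter.mp hv).2
    have hfib : (E.filter (fun p => p.1 = v)).card
        = ((nbrF v).filter (fun u => f u = 1)).card := by
      apply Finset.card_bij (fun p _ => p.2)
      · intro p hp
        simp only [hE, Finset.mem_filter, Finset.mem_univ, true_and] at hp
        obtain ⟨⟨hadj, _, hp2⟩, hp1⟩ := hp
        subst hp1
        simp [Finset.mem_filter, mem_nbrF, hadj, hp2]
      · intro p hp q hq hpq
        simp only [hE, Finset.mem_filter, Finset.mem_univ, true_and] at hp hq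
        exact Prod.ext (hp.2.trans hq.2.symm) hpq
      · intro u hu
        simp only [Finset.mem_filter, mem_nbrF] at hu
        exact ⟨(v, u), by simp [hE, Finset.mem_filter, hu.1, hu.2, hv0], rfl⟩
    rw [hfib, count_eq hf v 1, hv0, Smat01]
  have h2 : E.card = C1.card * c := by
    rw [Finset.card_eq_sum_card_fiberwise (f := Prod.snd) (t := C1)
      (fun p hp => by
        simp only [hE, Finset.coe_filter, Set.mem_setOf_eq, Finset.mem_filter, Finset.mem_univ, true_and] at hp
        simp [hC1, hp.2.2])]
    rw [Finset.sum_congr rfl (fun u hu => ?_), Finset.sum_const, smul_eq_mul]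
    have hu1 : f u = 1 := (Finset.mem_filter.mp hu).2
    have hfib : (E.filter (fun p => p.2 = u)).card
        = ((nbrF u).filter (fun z => f z = 0)).card := by
      apply Finset.card_bij (fun p _ => p.1)
      · intro p hp
        simp only [hE, Finset.mem_filter, Finset.mem_univ, true_and] at hp
        obtain ⟨⟨hadj, hp1, _⟩, hp2⟩ := hp
        subst hp2
        simp [Finset.mem_filter, mem_nbrF, hadj.symm, hp1]
      · intro p hp q hq hpq
        simp only [hE, Finset.mem_filter, Finset.mem_univ, true_and] at hp hq
        exact Prod.ext hpq (hp.2.trans hq.2.symm)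
      · intro z hz
        simp only [Finset.mem_filter, mem_nbrF] at hz
        exact ⟨(z, u), by simp [hE, Finset.mem_filter, hz.1.symm, hz.2, hu1], rfl⟩
    rw [hfib, count_eq hf u 0, hu1, Smat10]
  have h3 : C0.card + C1.card = 4 ^ (2 * m + n) := by
    rw [← card_V (m := m) (n := n), ← Finset.card_univ,
      ← Finset.card_filter_add_card_filter_not (s := univ)
        (p := fun v : DoobVertex m n => f v = 0)]
    congr 2
    apply Finset.filter_congr
    intro u _
    simp [fin2_ne]
  obtain ⟨v0, hv0⟩ := hf.1 0
  obtain ⟨v1, hv1⟩ := hf.1 1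
  refine ⟨C0.card, C1.card, ?_, ?_, h3, by rw [← h1, ← h2]⟩
  · exact Finset.card_pos.mpr ⟨v0, by simp [hC0, hv0]⟩
  · exact Finset.card_pos.mpr ⟨v1, by simp [hC1, hv1]⟩


/-! ### Structure when c = 1 -/

open scoped Classical in
lemma common_nbr (hf : IsPerfectColoring (doobGraph m n) f (Smat a b c d)) (hc1 : c = 1)
    {u w x : DoobVertex m n} (hu : f u = 0) (hw : f w = 0) (huw : u ≠ w)
    (hxu : (doobGraph m n).Adj x u) (hxw : (doobGraph m n).Adj x w) : f x = 0 := by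
  by_contra h
  have hx1 : f x = 1 := (fin2_ne _).mp h
  have hcount := count_eq hf x 0
  rw [hx1, Smat10, hc1] at hcount
  have hsub : ({u, w} : Finset (DoobVertex m n)) ⊆ (nbrF x).filter (fun z => f z = 0) := by
    intro z hz
    rcases Finset.mem_insert.mp hz with rfl | hz
    · simp [Finset.mem_filter, mem_nbrF, hxu, hu]
    · rw [Finset.mem_singleton.mp hz]
      simp [Finset.mem_filter, mem_nbrF, hxw, hw]
  have h2 : 2 ≤ ((nbrF x).filter (fun z => f z = 0)).card := by
    calc 2 = ({u, w} : Finset (DoobVertex m n)).card := by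
          rw [Finset.card_insert_of_notMem (by simpa using huw), Finset.card_singleton]
      _ ≤ _ := Finset.card_le_card hsub
  omega

def shStep (D : Finset SV) : Finset SV :=
  D ∪ univ.filter (fun r => ∃ p ∈ D, ∃ q ∈ D, p ≠ q ∧ r - p ∈ shSF ∧ r - q ∈ shSF)

lemma shStep_closure : ∀ s ∈ shSF, shStep (shStep (shStep {0, s})) = univ := by decide

lemma shClosed_subset {D : Finset SV} {T : Set SV}
    (hT : ∀ p q r : SV, p ∈ T → q ∈ T → p ≠ q → r - p ∈ shSF → r - q ∈ shSF → r ∈ T)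
    (hD : ∀ x ∈ D, x ∈ T) : ∀ x ∈ shStep D, x ∈ T := by
  intro x hx
  rcases Finset.mem_union.mp hx with h | h
  · exact hD x h
  · obtain ⟨p, hp, q, hq, hpq, h1', h2'⟩ := (Finset.mem_filter.mp h).2
    exact hT p q x (hD p hp) (hD q hq) hpq h1' h2'

lemma updSh_inj (v : DoobVertex m n) (i : Fin m) {p q : SV} (h : p ≠ q) :
    updSh v i p ≠ updSh v i q := by
  intro hiq
  have := congrFun (congrArg Prod.fst hiq) i
  simp only [updSh, Function.update_self] at this
  exact h (by rwa [add_right_inj] at this)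

lemma adj_updSh_pair (v : DoobVertex m n) (i : Fin m) {p q : SV} (h : q - p ∈ shSF) :
    (doobGraph m n).Adj (updSh v i p) (updSh v i q) := by
  rw [doob_adj_iff]
  refine Or.inl ⟨i, ?_, fun j hj => ?_, rfl⟩
  · rw [shrik_adj_iff]
    simpa [updSh, add_sub_add_left_eq_sub] using h
  · simp [updSh, Function.update_of_ne hj]

lemma updSh_zero (v : DoobVertex m n) (i : Fin m) : updSh v i 0 = v := by
  refine Prod.ext ?_ rfl
  show Function.update v.1 i (v.1 i + 0) = v.1
  rw [add_zero, Function.update_eq_self]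

lemma block_full (hf : IsPerfectColoring (doobGraph m n) f (Smat a b c d)) (hc1 : c = 1)
    {v : DoobVertex m n} (hv : f v = 0) {i : Fin m} {s : SV} (hs : s ∈ shSF)
    (h0 : f (updSh v i s) = 0) : ∀ p : SV, f (updSh v i p) = 0 := by
  set T : Set SV := {p | f (updSh v i p) = 0} with hTdef
  have hT : ∀ p q r : SV, p ∈ T → q ∈ T → p ≠ q → r - p ∈ shSF → r - q ∈ shSF → r ∈ T := by
    intro p q r hp hq hpq h1 h2
    exact common_nbr hf hc1 hp hq (updSh_inj v i hpq)
      ((adj_updSh_pair v i h1).symm) ((adj_updSh_pair v i h2).symm)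
  have hbase : ∀ x ∈ ({0, s} : Finset SV), x ∈ T := by
    intro x hx
    rcases Finset.mem_insert.mp hx with rfl | hx
    · show f (updSh v i 0) = 0
      rw [updSh_zero]; exact hv
    · rw [Finset.mem_singleton.mp hx]; exact h0
  have hall := shClosed_subset hT (shClosed_subset hT (shClosed_subset hT hbase))
  intro p
  exact hall p (by rw [shStep_closure s hs]; exact Finset.mem_univ p)

lemma updK_inj (v : DoobVertex m n) (j : Fin n) {p q : Z4} (h : p ≠ q) :
    updK v j p ≠ updK v j q := by
  intro hiq
  have := congrFun (congrArg Prod.snd hiq) j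
  simp only [updK, Function.update_self] at this
  exact h (by rwa [add_right_inj] at this)

lemma adj_updK_pair (v : DoobVertex m n) (j : Fin n) {p q : Z4} (h : q ≠ p) :
    (doobGraph m n).Adj (updK v j p) (updK v j q) := by
  rw [doob_adj_iff]
  refine Or.inr ⟨j, ?_, fun j' hj' => ?_, rfl⟩
  · simp only [updK, Function.update_self]
    exact fun hh => h (((add_right_inj _).mp hh).symm)
  · simp [updK, Function.update_of_ne hj']

lemma updK_zero (v : DoobVertex m n) (j : Fin n) : updK v j 0 = v := by
  refine Prod.ext rfl ?_
  show Function.update v.2 j (v.2 j + 0) = v.2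
  rw [add_zero, Function.update_eq_self]

lemma line_full (hf : IsPerfectColoring (doobGraph m n) f (Smat a b c d)) (hc1 : c = 1)
    {v : DoobVertex m n} (hv : f v = 0) {j : Fin n} {t : Z4} (ht : t ≠ 0)
    (h0 : f (updK v j t) = 0) : ∀ p : Z4, f (updK v j p) = 0 := by
  intro p
  by_cases hp0 : p = 0
  · rw [hp0, updK_zero]; exact hv
  by_cases hpt : p = t
  · rw [hpt]; exact h0
  have h1 : (doobGraph m n).Adj (updK v j p) v := by
    have h' := adj_updK_pair v j (p := 0) (q := p) hp0
    rw [updK_zero] at h'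
    exact h'.symm
  have h2 : (doobGraph m n).Adj (updK v j p) (updK v j t) :=
    adj_updK_pair v j (fun hh => hpt hh.symm)
  refine common_nbr hf hc1 hv h0 ?_ h1 h2
  intro hvt
  have := congrFun (congrArg Prod.snd hvt) j
  simp only [updK, Function.update_self] at this
  exact ht (by rwa [left_eq_add] at this)


open scoped Classical in
lemma b_div (hf : IsPerfectColoring (doobGraph m n) f (Smat a b c d)) (hc1 : c = 1) :
    3 ∣ b ∧ (n = 0 → 2 ∣ b) := by
  obtain ⟨v, hv⟩ := hf.1 0
  have hb' : ((nbrF v).filter (fun u => f u = 1)).card = b := by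
    rw [count_eq hf v 1, hv, Smat01]
  have hsum : ((nbrF v).filter (fun u => f u = 1)).card =
      (∑ i : Fin m, (shSF.filter (fun s => f (updSh v i s) = 1)).card) +
      ∑ j : Fin n, (K3.filter (fun t => f (updK v j t) = 1)).card := by
    rw [Finset.card_filter, sum_nbr v (fun u => if f u = 1 then 1 else 0)]
    congr 1
    · exact Finset.sum_congr rfl fun i _ => (Finset.card_filter _ _).symm
    · exact Finset.sum_congr rfl fun j _ => (Finset.card_filter _ _).symm
  have hShDvd : ∀ i : Fin m, (shSF.filter (fun s => f (updSh v i s) = 1)).card = 0 ∨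
      (shSF.filter (fun s => f (updSh v i s) = 1)).card = 6 := by
    intro i
    by_cases hful : ∃ s ∈ shSF, f (updSh v i s) = 0
    · left
      obtain ⟨s, hs, h0⟩ := hful
      have hall := block_full hf hc1 hv hs h0
      rw [Finset.card_eq_zero, Finset.filter_eq_empty_iff]
      intro s' _
      rw [hall s']
      decide
    · right
      push_neg at hful
      rw [Finset.filter_true_of_mem (fun s hs => (fin2_ne _).mp (hful s hs)), shSF_card]
  have hKDvd : ∀ j : Fin n, (K3.filter (fun t => f (updK v j t) = 1)).card = 0 ∨
      (K3.filter (fun t => f (updK v j t) = 1)).card = 3 := by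
    intro j
    by_cases hful : ∃ t ∈ K3, f (updK v j t) = 0
    · left
      obtain ⟨t, ht, h0⟩ := hful
      have hall := line_full hf hc1 hv (mem_K3.mp ht) h0
      rw [Finset.card_eq_zero, Finset.filter_eq_empty_iff]
      intro t' _
      rw [hall t']
      decide
    · right
      push_neg at hful
      rw [Finset.filter_true_of_mem (fun t ht => (fin2_ne _).mp (hful t ht)), K3_card]
  constructor
  · rw [← hb', hsum]
    refine Nat.dvd_add (Finset.dvd_sum fun i _ => ?_) (Finset.dvd_sum fun j _ => ?_)
    · rcases hShDvd i with h | h <;> rw [h] <;> decide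
    · rcases hKDvd j with h | h <;> rw [h] <;> decide
  · intro hn
    subst hn
    rw [← hb', hsum]
    rw [show (∑ j : Fin 0, (K3.filter (fun t => f (updK v j t) = 1)).card) = 0 from rfl,
      add_zero]
    refine Finset.dvd_sum fun i _ => ?_
    rcases hShDvd i with h | h <;> rw [h] <;> decide

lemma case_c1 (hf : IsPerfectColoring (doobGraph m n) f (Smat a b c d))
    (hb : 1 ≤ b) (hc1 : c = 1) :
    (∃ l : ℕ, 0 < l ∧ b = 4 ^ l - 1) ∧ n ≠ 0 := by
  obtain ⟨N0, N1, hN0, hN1, hNsum, hNbal⟩ := count_classes hf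
  rw [hc1, mul_one] at hNbal
  have hfour : 4 ^ (2 * m + n) = 2 ^ (2 * (2 * m + n)) := by
    rw [show (4 : ℕ) = 2 ^ 2 from rfl, ← pow_mul]
  have hdvd : (b + 1) ∣ 2 ^ (2 * (2 * m + n)) := by
    refine ⟨N0, ?_⟩
    rw [← hfour, ← hNsum, Nat.add_mul, one_mul, mul_comm b N0, hNbal, Nat.add_comm]
  obtain ⟨k, hkle, hbk⟩ := (Nat.dvd_prime_pow Nat.prime_two).mp hdvd
  have hk1 : 1 ≤ k := by
    rcases Nat.eq_zero_or_pos k with rfl | h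
    · rw [pow_zero] at hbk; omega
    · exact h
  obtain ⟨h3, h2⟩ := b_div hf hc1
  have hnne : n ≠ 0 := by
    intro hn
    have h2' := h2 hn
    have h2k : 2 ∣ 2 ^ k := dvd_pow_self 2 (by omega)
    omega
  refine ⟨?_, hnne⟩
  rcases Nat.even_or_odd k with ⟨l, hl⟩ | ⟨l, hl⟩
  · refine ⟨l, by omega, ?_⟩
    have h4l : 4 ^ l = 2 ^ k := by
      rw [hl, show (4 : ℕ) = 2 ^ 2 from rfl, ← pow_mul]
      ring_nf
    omega
  · exfalso
    have h4l : ∀ L : ℕ, 4 ^ L % 3 = 1 := by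
      intro L
      induction L with
      | zero => rfl
      | succ L ih => rw [pow_succ, Nat.mul_mod, ih]
    have h4l' := h4l l
    have h2k : 2 ^ k = 2 * 4 ^ l := by
      rw [hl, show (4 : ℕ) = 2 ^ 2 from rfl, ← pow_mul, pow_succ, mul_comm]
    omega

lemma swap_coloring (hf : IsPerfectColoring (doobGraph m n) f (Smat a b c d)) :
    IsPerfectColoring (doobGraph m n) (fun v => 1 - f v) (Smat d c b a) := by
  constructor
  · intro y
    rcases fin2_cases y with rfl | rfl
    · obtain ⟨x, hx⟩ := hf.1 1
      exact ⟨x, by show 1 - f x = 0; rw [hx]; decide⟩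
    · obtain ⟨x, hx⟩ := hf.1 0
      exact ⟨x, by show 1 - f x = 1; rw [hx]; decide⟩
  · intro x c'
    have hswap : ∀ t z : Fin 2, (1 - z = t) ↔ (z = 1 - t) := by decide
    have hset : {y | (doobGraph m n).Adj x y ∧ 1 - f y = c'} =
        {y | (doobGraph m n).Adj x y ∧ f y = 1 - c'} := by
      ext y
      rw [Set.mem_setOf_eq, Set.mem_setOf_eq, hswap c' (f y)]
    show Set.ncard {y | (doobGraph m n).Adj x y ∧ 1 - f y = c'} = _
    rw [hset, hf.2 x (1 - c')]
    rcases fin2_cases (f x) with hx | hx <;> rcases fin2_cases c' with rfl | rfl <;>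
      simp only [hx] <;> rfl

lemma part1_arith (b c N0 N1 Ntot : ℕ) (hb : 1 ≤ b) (hc : 1 ≤ c) (hN0 : 1 ≤ N0)
    (hN1 : 1 ≤ N1) (hsum : N0 + N1 = 4 ^ Ntot) (hbal : N0 * b = N1 * c) :
    ∃ k : ℕ, 0 < k ∧ b + c = Nat.gcd b c * 2 ^ k := by
  set g := Nat.gcd b c with hg
  have hgpos : 0 < g := Nat.gcd_pos_of_pos_left c hb
  set b' := b / g with hb'def
  set c' := c / g with hc'def
  have hb' : g * b' = b := Nat.mul_div_cancel' (Nat.gcd_dvd_left b c)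
  have hc' : g * c' = c := Nat.mul_div_cancel' (Nat.gcd_dvd_right b c)
  have hcop : Nat.Coprime b' c' := Nat.coprime_div_gcd_div_gcd hgpos
  have hb'pos : 1 ≤ b' := by
    rcases Nat.eq_zero_or_pos b' with h | h
    · rw [h, mul_zero] at hb'; omega
    · exact h
  have hc'pos : 1 ≤ c' := by
    rcases Nat.eq_zero_or_pos c' with h | h
    · rw [h, mul_zero] at hc'; omega
    · exact h
  have hbal' : N0 * b' = N1 * c' := by
    refine Nat.eq_of_mul_eq_mul_left hgpos ?_
    calc g * (N0 * b') = N0 * (g * b') := by ring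
      _ = N1 * (g * c') := by rw [hb', hc', hbal]
      _ = g * (N1 * c') := by ring
  have hc'dvd : c' ∣ N0 := by
    refine (Nat.Coprime.dvd_of_dvd_mul_right hcop.symm) ⟨N1, ?_⟩
    rw [hbal']; ring
  obtain ⟨M, hM⟩ := hc'dvd
  have hN1M : N1 = M * b' := by
    refine (Nat.eq_of_mul_eq_mul_left hc'pos ?_).symm
    calc c' * (M * b') = (c' * M) * b' := by ring
      _ = N0 * b' := by rw [← hM]
      _ = N1 * c' := hbal'
      _ = c' * N1 := by ring
  have htot : M * (b' + c') = 2 ^ (2 * Ntot) := by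
    rw [show (2 : ℕ) ^ (2 * Ntot) = 4 ^ Ntot by
      rw [show (4 : ℕ) = 2 ^ 2 from rfl, ← pow_mul], ← hsum, hM, hN1M]
    ring
  have hdvd2 : (b' + c') ∣ 2 ^ (2 * Ntot) := ⟨M, by rw [← htot]; ring⟩
  obtain ⟨k, hkle, hk⟩ := (Nat.dvd_prime_pow Nat.prime_two).mp hdvd2
  refine ⟨k, ?_, ?_⟩
  · rcases Nat.eq_zero_or_pos k with rfl | h
    · rw [pow_zero] at hk; omega
    · exact h
  · rw [← hk, ← hb', ← hc']
    ring

end S2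

theorem stmt_2 (m n b c : ℕ) (hb : 1 ≤ b) (hc : 1 ≤ c) (hmn : 1 ≤ 2 * m + n)
    (f : DoobVertex m n → Fin 2)
    (hf : IsPerfectBCColoring (doobGraph m n) f b c) :
    (∃ k : ℕ, 0 < k ∧ b + c = Nat.gcd b c * 2 ^ k) ∧
    (∃ i : ℕ, 1 ≤ i ∧ i ≤ 2 * m + n ∧ b + c = 4 * i) ∧
    (c = 1 → (∃ l : ℕ, 0 < l ∧ b = 4 ^ l - 1) ∧ n ≠ 0) ∧
    (b = 1 → (∃ l : ℕ, 0 < l ∧ c = 4 ^ l - 1) ∧ n ≠ 0) := by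
  obtain ⟨a, d, hpc⟩ := hf
  have hpc' : IsPerfectColoring (doobGraph m n) f (S2.Smat a b c d) := hpc
  obtain ⟨N0, N1, hN0, hN1, hNsum, hNbal⟩ := S2.count_classes hpc'
  refine ⟨S2.part1_arith b c N0 N1 (2 * m + n) hb hc hN0 hN1 hNsum hNbal,
    S2.bc_four hpc' hb hc, fun hc1 => S2.case_c1 hpc' hb hc1,
    fun hb1 => S2.case_c1 (S2.swap_coloring hpc') hc hb1⟩
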